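/- Let a ∈ (0,1], ρ ∈ (−1,1) with ρ > A_a = (1−√(8a²+1))/(4a) and a > max(0, ρ). Then the function f(t) = (t − 2aρt + a²)/(t(1 − ρ²t)) on (0,1] attains its minimum at t = 1, with minimal value (1 − 2aρ + a²)/(1 − ρ²). -/
import Mathlib


theorem stmt9 (a ρ : ℝ) (hρ : ρ ∈ Set.Ioo (-1 : ℝ) 1)
    (hρA : (1 - Real.sqrt (8 * a ^ 2 + 1)) / (4 * a) < ρ)
    (ha : max 0 ρ < a) (ha1 : a ≤ 1) :
    (∀ t ∈ Set.Ioc (0 : ℝ) 1,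
        (1 - 2 * a * ρ * 1 + a ^ 2) / (1 * (1 - ρ ^ 2 * 1)) ≤
          (t - 2 * a * ρ * t + a ^ 2) / (t * (1 - ρ ^ 2 * t))) ∧
      (1 - 2 * a * ρ * 1 + a ^ 2) / (1 * (1 - ρ ^ 2 * 1)) =
        (1 - 2 * a * ρ + a ^ 2) / (1 - ρ ^ 2) := by
  obtain ⟨hρ1, hρ2⟩ := hρ
  have ha0 : 0 < a := lt_of_le_of_lt (le_max_left _ _) ha
  have hρa : ρ < a := lt_of_le_of_lt (le_max_right _ _) ha
  -- key quadratic fact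
  have hquad : 2 * a * ρ ^ 2 - ρ - a ≤ 0 := by
    rcases le_or_gt 0 ρ with h0 | h0
    · nlinarith [mul_nonneg h0 (le_of_lt ha0), sq_nonneg (a - ρ), sq_nonneg a]
    · have hs : 1 - Real.sqrt (8 * a ^ 2 + 1) < 4 * a * ρ := by
        have := (div_lt_iff₀ (by linarith : (0:ℝ) < 4 * a)).mp hρA
        linarith
      have hsq : Real.sqrt (8 * a ^ 2 + 1) ^ 2 = 8 * a ^ 2 + 1 :=
        Real.sq_sqrt (by positivity)
      have hpos : 0 < 1 - 4 * a * ρ := by nlinarith [mul_pos ha0 (neg_pos.mpr h0)]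
      have hs0 : 0 ≤ Real.sqrt (8 * a ^ 2 + 1) := Real.sqrt_nonneg _
      nlinarith [sq_nonneg (Real.sqrt (8 * a ^ 2 + 1) - (1 - 4 * a * ρ))]
  have hK : 0 ≤ 1 - 2 * a * ρ + a ^ 2 := by nlinarith [mul_lt_mul_of_pos_left hρa ha0]
  constructor
  · intro t ht
    obtain ⟨ht0, ht1⟩ := ht
    have hρsq : ρ ^ 2 < 1 := by nlinarith
    have hd1 : (0:ℝ) < 1 * (1 - ρ ^ 2 * 1) := by nlinarith
    have hd2 : (0:ℝ) < t * (1 - ρ ^ 2 * t) := by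
      have : ρ ^ 2 * t ≤ ρ ^ 2 * 1 := by nlinarith [sq_nonneg ρ]
      nlinarith
    rw [div_le_div_iff₀ hd1 hd2]
    have H1 : 0 ≤ (1 - t) * ((a - ρ) * (-(2 * a * ρ ^ 2 - ρ - a))) :=
      mul_nonneg (by linarith) (mul_nonneg (by linarith) (by linarith))
    have H2 : 0 ≤ (1 - 2 * a * ρ + a ^ 2) * (ρ * (1 - t)) ^ 2 :=
      mul_nonneg hK (sq_nonneg _)
    nlinarith [H1, H2]
  · ring
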